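/- Fix N ≥ 1, M > 0, c ≥ 0, k ≥ 0, ε ≥ 0. Let x₁,…,x_N : ℝ → ℝ be twice differentiable, set x₀(t) = x_{N+1}(t) = 0 for all t, write Δ⁻x_j = x_j − x_{j−1} and Δ⁺x_j = x_j − x_{j+1} (and similarly for velocities), and suppose that for every j = 1,…,N and every t: M·x_j''(t) + c·(Δ⁻x_j(t)·sgn(Δ⁻x_j(t)·Δ⁻x_j'(t)) + Δ⁺x_j(t)·sgn(Δ⁺x_j(t)·Δ⁺x_j'(t))) + k·(Δ⁻x_j(t) + Δ⁺x_j(t)) + ε·((Δ⁻x_j(t))³ + (Δ⁺x_j(t))³) = 0 (the unforced model II lattice). Then the total energy E(t) = Σ_{j=1}^{N} (M/2)·x_j'(t)² + Σ_{j=0}^{N} [(k/2)·(x_{j+1}(t) − x_j(t))² + (ε/4)·(x_{j+1}(t) − x_j(t))⁴] is nonincreasing in t; indeed E is differentiable with E'(t) = −c·Σ_{j=0}^{N} |(x_{j+1}(t) − x_j(t))·(x_{j+1}'(t) − x_j'(t))| ≤ 0, i.e. each bond dissipates energy at rate c·|Δx·Δẋ|. -/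

import Mathlib

open Finset

private lemma self_mul_sign' (y : ℝ) : y * Real.sign y = |y| := by
  rcases lt_trichotomy y 0 with h | h | h
  · rw [Real.sign_of_neg h, abs_of_neg h]; ring
  · simp [h]
  · rw [Real.sign_of_pos h, abs_of_pos h]; ring

private lemma abel_aux' (f g : ℕ → ℝ) : ∀ N : ℕ,
    ∑ j ∈ range (N + 1), f j * (g (j + 1) - g j)
      = (∑ j ∈ Icc 1 N, (f (j - 1) - f j) * g j) + f N * g (N + 1) - f 0 * g 0 := by
  intro N
  induction N with
  | zero => simp [Finset.sum_range_one]; ring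
  | succ n ih =>
    rw [Finset.sum_range_succ, ih, Finset.sum_Icc_succ_top (by omega : 1 ≤ n + 1)]
    simp only [Nat.add_sub_cancel]
    ring

private noncomputable def bondF' (x x' : ℕ → ℝ → ℝ) (c k ε t : ℝ) (i : ℕ) : ℝ :=
  c * (x (i + 1) t - x i t)
      * Real.sign ((x (i + 1) t - x i t) * (x' (i + 1) t - x' i t))
    + k * (x (i + 1) t - x i t) + ε * (x (i + 1) t - x i t) ^ 3

/-- For the unforced model II lattice of `N` oscillators with nearest-neighbor
dependent (non-local) hysteretic damping and fixed boundary conditions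
`x₀ = x_{N+1} = 0` (and `ẋ₀ = ẋ_{N+1} = 0`), the total energy
`E(t) = Σ_{j=1}^{N} (M/2)·ẋ_j² + Σ_{j=0}^{N} [(k/2)·(x_{j+1}−x_j)² + (ε/4)·(x_{j+1}−x_j)⁴]`
is nonincreasing; indeed it is differentiable with
`E'(t) = −c·Σ_{j=0}^{N} |(x_{j+1}−x_j)·(ẋ_{j+1}−ẋ_j)| ≤ 0`, i.e. each bond
dissipates energy at rate `c·|Δx·Δẋ|`. -/
theorem modelII_unforced_energy_nonincreasing
    (N : ℕ) (hN : 1 ≤ N)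
    (M c k ε : ℝ) (hM : 0 < M) (hc : 0 ≤ c) (hk : 0 ≤ k) (hε : 0 ≤ ε)
    (x x' x'' : ℕ → ℝ → ℝ)
    (hx : ∀ j ∈ Icc 1 N, ∀ t, HasDerivAt (x j) (x' j t) t)
    (hx' : ∀ j ∈ Icc 1 N, ∀ t, HasDerivAt (x' j) (x'' j t) t)
    (hb0 : ∀ t, x 0 t = 0) (hbN : ∀ t, x (N + 1) t = 0)
    (hb0' : ∀ t, x' 0 t = 0) (hbN' : ∀ t, x' (N + 1) t = 0)
    (heq : ∀ j ∈ Icc 1 N, ∀ t,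
      M * x'' j t
        + c * ((x j t - x (j - 1) t)
                * Real.sign ((x j t - x (j - 1) t) * (x' j t - x' (j - 1) t))
              + (x j t - x (j + 1) t)
                * Real.sign ((x j t - x (j + 1) t) * (x' j t - x' (j + 1) t)))
        + k * ((x j t - x (j - 1) t) + (x j t - x (j + 1) t))
        + ε * ((x j t - x (j - 1) t) ^ 3 + (x j t - x (j + 1) t) ^ 3) = 0)
    (E : ℝ → ℝ)
    (hE : ∀ t, E t
      = (∑ j ∈ Icc 1 N, M / 2 * (x' j t) ^ 2)
        + ∑ j ∈ range (N + 1),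
            (k / 2 * (x (j + 1) t - x j t) ^ 2
              + ε / 4 * (x (j + 1) t - x j t) ^ 4)) :
    (∀ t, HasDerivAt E
      (-(c * ∑ j ∈ range (N + 1),
          |(x (j + 1) t - x j t) * (x' (j + 1) t - x' j t)|)) t) ∧
    (∀ t, -(c * ∑ j ∈ range (N + 1),
        |(x (j + 1) t - x j t) * (x' (j + 1) t - x' j t)|) ≤ 0) ∧
    Antitone E := by
  have hxall : ∀ j, j ≤ N + 1 → ∀ t, HasDerivAt (x j) (x' j t) t := by
    intro j hj t
    rcases Nat.eq_zero_or_pos j with rfl | hj1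
    · have h0 : x 0 = fun _ => (0 : ℝ) := funext hb0
      rw [h0, hb0']
      exact hasDerivAt_const t 0
    · rcases eq_or_lt_of_le hj with rfl | hlt
      · have h0 : x (N + 1) = fun _ => (0 : ℝ) := funext hbN
        rw [h0, hbN']
        exact hasDerivAt_const t 0
      · exact hx j (mem_Icc.mpr ⟨hj1, by omega⟩) t
  have key : ∀ t, HasDerivAt E
      (-(c * ∑ j ∈ range (N + 1),
          |(x (j + 1) t - x j t) * (x' (j + 1) t - x' j t)|)) t := by
    intro t
    have hEfun : E = fun s =>
        (∑ j ∈ Icc 1 N, M / 2 * (x' j s) ^ 2)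
          + ∑ j ∈ range (N + 1),
              (k / 2 * (x (j + 1) s - x j s) ^ 2
                + ε / 4 * (x (j + 1) s - x j s) ^ 4) := funext hE
    have hd1 : HasDerivAt (fun s => ∑ j ∈ Icc 1 N, M / 2 * (x' j s) ^ 2)
        (∑ j ∈ Icc 1 N, M * x' j t * x'' j t) t := by
      apply HasDerivAt.fun_sum
      intro j hj
      have h : HasDerivAt (fun y => M / 2 * x' j y ^ 2)
          (M / 2 * ((2 : ℕ) * x' j t ^ (2 - 1) * x'' j t)) t :=
        ((hx' j hj t).pow 2).const_mul (M / 2)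
      refine h.congr_deriv ?_
      push_cast
      ring
    have hd2 : HasDerivAt (fun s => ∑ j ∈ range (N + 1),
        (k / 2 * (x (j + 1) s - x j s) ^ 2 + ε / 4 * (x (j + 1) s - x j s) ^ 4))
        (∑ j ∈ range (N + 1),
          (k * (x (j + 1) t - x j t) + ε * (x (j + 1) t - x j t) ^ 3)
            * (x' (j + 1) t - x' j t)) t := by
      apply HasDerivAt.fun_sum
      intro j hj
      have hjN : j < N + 1 := mem_range.mp hj
      have hsub := (hxall (j + 1) (by omega) t).sub (hxall j (by omega) t)
      have h := ((hsub.pow 2).const_mul (k / 2)).add ((hsub.pow 4).const_mul (ε / 4))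
      simp only [Pi.pow_apply, Pi.sub_apply, Pi.add_def] at h
      convert h using 1
      push_cast
      ring
    have hD1 : ∀ j ∈ Icc 1 N, M * x' j t * x'' j t
        = -((bondF' x x' c k ε t (j - 1) - bondF' x x' c k ε t j) * x' j t) := by
      intro j hj
      have hj1 : 1 ≤ j := (mem_Icc.mp hj).1
      obtain ⟨i, rfl⟩ : ∃ i, j = i + 1 := ⟨j - 1, (Nat.succ_pred_eq_of_pos hj1).symm⟩
      have h := heq (i + 1) hj t
      simp only [Nat.add_sub_cancel] at h ⊢
      have e : (x (i + 1) t - x (i + 1 + 1) t) * (x' (i + 1) t - x' (i + 1 + 1) t)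
          = (x (i + 1 + 1) t - x (i + 1) t) * (x' (i + 1 + 1) t - x' (i + 1) t) := by ring
      rw [e] at h
      simp only [bondF']
      linear_combination x' (i + 1) t * h
    have habel := abel_aux' (bondF' x x' c k ε t) (fun i => x' i t) N
    simp only [hb0' t, hbN' t, mul_zero, add_zero, sub_zero] at habel
    have halg : (∑ j ∈ Icc 1 N, M * x' j t * x'' j t)
        + (∑ j ∈ range (N + 1),
            (k * (x (j + 1) t - x j t) + ε * (x (j + 1) t - x j t) ^ 3)
              * (x' (j + 1) t - x' j t))
        = -(c * ∑ j ∈ range (N + 1),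
            |(x (j + 1) t - x j t) * (x' (j + 1) t - x' j t)|) := by
      rw [Finset.sum_congr rfl hD1]
      have hterm : ∀ j ∈ range (N + 1),
          -(bondF' x x' c k ε t j * (x' (j + 1) t - x' j t))
            + (k * (x (j + 1) t - x j t) + ε * (x (j + 1) t - x j t) ^ 3)
              * (x' (j + 1) t - x' j t)
          = -(c * |(x (j + 1) t - x j t) * (x' (j + 1) t - x' j t)|) := by
        intro j hj
        have hs := self_mul_sign' ((x (j + 1) t - x j t) * (x' (j + 1) t - x' j t))
        simp only [bondF']
        linear_combination (-c) * hs
      calc (∑ j ∈ Icc 1 N,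
              -((bondF' x x' c k ε t (j - 1) - bondF' x x' c k ε t j) * x' j t))
            + (∑ j ∈ range (N + 1),
                (k * (x (j + 1) t - x j t) + ε * (x (j + 1) t - x j t) ^ 3)
                  * (x' (j + 1) t - x' j t))
          = -(∑ j ∈ range (N + 1),
                bondF' x x' c k ε t j * (x' (j + 1) t - x' j t))
            + (∑ j ∈ range (N + 1),
                (k * (x (j + 1) t - x j t) + ε * (x (j + 1) t - x j t) ^ 3)
                  * (x' (j + 1) t - x' j t)) := by
              rw [Finset.sum_neg_distrib, habel]
        _ = ∑ j ∈ range (N + 1),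
              (-(bondF' x x' c k ε t j * (x' (j + 1) t - x' j t))
                + (k * (x (j + 1) t - x j t) + ε * (x (j + 1) t - x j t) ^ 3)
                  * (x' (j + 1) t - x' j t)) := by
              rw [Finset.sum_add_distrib, Finset.sum_neg_distrib]
        _ = ∑ j ∈ range (N + 1),
              -(c * |(x (j + 1) t - x j t) * (x' (j + 1) t - x' j t)|) :=
              Finset.sum_congr rfl hterm
        _ = -(c * ∑ j ∈ range (N + 1),
              |(x (j + 1) t - x j t) * (x' (j + 1) t - x' j t)|) := by
              rw [Finset.sum_neg_distrib, Finset.mul_sum]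
    have htot := hd1.add hd2
    rw [halg] at htot
    rw [hEfun]
    exact htot
  have hnonpos : ∀ t, -(c * ∑ j ∈ range (N + 1),
      |(x (j + 1) t - x j t) * (x' (j + 1) t - x' j t)|) ≤ 0 := by
    intro t
    have h0 : 0 ≤ c * ∑ j ∈ range (N + 1),
        |(x (j + 1) t - x j t) * (x' (j + 1) t - x' j t)| :=
      mul_nonneg hc (Finset.sum_nonneg fun j _ => abs_nonneg _)
    linarith
  refine ⟨key, hnonpos, ?_⟩
  apply antitone_of_deriv_nonpos
  · exact fun t => (key t).differentiableAt
  · intro t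
    rw [(key t).deriv]
    exact hnonpos t
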